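/- Let n ≥ 1. For v ∈ ℝⁿ let ι(v) ∈ ℝ^{2n} be the vector with components ι(v)_{2i−1} = v_i and ι(v)_{2i} = 0 for 1 ≤ i ≤ n, and for R ∈ SO(n) let Σ(R) be the 2n×2n matrix with Σ(R)_{2i−1,2j−1} = Σ(R)_{2i,2j} = R_{ij} and all other entries zero. Then for all v, v' ∈ ℝⁿ and R, R' ∈ SO(n) one has Γ°(Σ(R'), ι(v'), 0)·Γ°(Σ(R), ι(v), 0) = Γ°(Σ(R'R), ι(v' + R'v), 0); hence the map (v, R) ↦ Γ°(Σ(R), ι(v), 0) is an injective group homomorphism from the Euclidean group E(n) = ℝⁿ ⋊ SO(n) (with product (v', R')·(v, R) = (v' + R'v, R'R)) into the Jacobi group {Γ°(Σ, w, r) : Σ ∈ Sp(2n), w ∈ ℝ^{2n}, r ∈ ℝ}. -/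
import Mathlib


open Matrix

noncomputable section

/-- `η`: the `(2n+2)×(2n+2)` matrix whose only nonzero entry is a `1`
in the bottom-right corner. -/
def etaM (n : ℕ) : Matrix (Fin (2*n+2)) (Fin (2*n+2)) ℝ :=
  Matrix.of fun i j => if i.val = 2*n+1 ∧ j.val = 2*n+1 then 1 else 0

/-- `ζ°`: block-diagonal with `n` copies of `[[0,1],[-1,0]]`. -/
def zetaC (n : ℕ) : Matrix (Fin (2*n)) (Fin (2*n)) ℝ :=
  Matrix.of fun i j =>
    if j.val = i.val + 1 ∧ i.val % 2 = 0 then 1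
    else if i.val = j.val + 1 ∧ j.val % 2 = 0 then -1 else 0

/-- `ζ = diag(ζ°, [[0,1],[-1,0]])`: block-diagonal with `n+1` copies of `[[0,1],[-1,0]]`. -/
def zetaBig (n : ℕ) : Matrix (Fin (2*n+2)) (Fin (2*n+2)) ℝ :=
  Matrix.of fun i j =>
    if j.val = i.val + 1 ∧ i.val % 2 = 0 then 1
    else if i.val = j.val + 1 ∧ j.val % 2 = 0 then -1 else 0

/-- `Λ°(Ω,u)`: the block matrix `[[Ω, u],[0, 1]]` (blocks of sizes `2n+1` and `1`). -/
def LamO (n : ℕ) (Ω : Matrix (Fin (2*n+1)) (Fin (2*n+1)) ℝ) (u : Fin (2*n+1) → ℝ) :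
    Matrix (Fin (2*n+2)) (Fin (2*n+2)) ℝ :=
  Matrix.of fun i j =>
    if hi : i.val < 2*n+1 then
      if hj : j.val < 2*n+1 then Ω ⟨i.val, hi⟩ ⟨j.val, hj⟩ else u ⟨i.val, hi⟩
    else
      if j.val < 2*n+1 then 0 else 1

/-- `Δ(ε) = diag(1,…,1,ε)`. -/
def DeltaM (n : ℕ) (ε : ℝ) : Matrix (Fin (2*n+2)) (Fin (2*n+2)) ℝ :=
  Matrix.diagonal fun i => if i.val < 2*n+1 then 1 else ε

/-- `Γ°(Σ,w,r)`: the block matrix (blocks of sizes `2n`, `1`, `1`)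
`[[Σ, 0, w],[wᵀζ°Σ, 1, 2r],[0, 0, 1]]`. -/
def GamO (n : ℕ) (S : Matrix (Fin (2*n)) (Fin (2*n)) ℝ) (w : Fin (2*n) → ℝ) (r : ℝ) :
    Matrix (Fin (2*n+2)) (Fin (2*n+2)) ℝ :=
  Matrix.of fun i j =>
    if hi : i.val < 2*n then
      if hj : j.val < 2*n then S ⟨i.val, hi⟩ ⟨j.val, hj⟩
      else if j.val = 2*n then 0 else w ⟨i.val, hi⟩
    else if i.val = 2*n then
      if hj : j.val < 2*n then Matrix.vecMul (Matrix.vecMul w (zetaC n)) S ⟨j.val, hj⟩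
      else if j.val = 2*n then 1 else 2*r
    else
      if j.val = 2*n+1 then 1 else 0

/-- `Υ(w,r) = Γ°(1_{2n}, w, r)`: Weyl–Heisenberg element in unpolarized coordinates. -/
def Ups (n : ℕ) (w : Fin (2*n) → ℝ) (r : ℝ) : Matrix (Fin (2*n+2)) (Fin (2*n+2)) ℝ :=
  GamO n 1 w r

/-- The Lie algebra generator `W_a = [[0,0,e_a],[e_aᵀζ°,0,0],[0,0,0]]`. -/
def Wmat (n : ℕ) (a : Fin (2*n)) : Matrix (Fin (2*n+2)) (Fin (2*n+2)) ℝ :=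
  Matrix.of fun i j =>
    if i.val < 2*n ∧ j.val = 2*n+1 then (if i.val = a.val then 1 else 0)
    else if _hi : i.val = 2*n then
      (if hj : j.val < 2*n then zetaC n a ⟨j.val, hj⟩ else 0)
    else 0

/-- The central generator `R`: only nonzero entry a `2` in position `(2n+1, 2n+2)` (1-indexed). -/
def Rmat (n : ℕ) : Matrix (Fin (2*n+2)) (Fin (2*n+2)) ℝ :=
  Matrix.of fun i j => if i.val = 2*n ∧ j.val = 2*n+1 then 2 else 0

/-- Time reversal `T = diag(1_{2n}, -1, -1)`. -/
def Tmat (n : ℕ) : Matrix (Fin (2*n+2)) (Fin (2*n+2)) ℝ :=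
  Matrix.diagonal fun i => if i.val < 2*n then 1 else -1

/-- `Σ(R)`: the `2n×2n` matrix with `Σ(R)_{2i-1,2j-1} = Σ(R)_{2i,2j} = R_{ij}`
(1-indexed) and all other entries zero. -/
def SigmaR (n : ℕ) (R : Matrix (Fin n) (Fin n) ℝ) : Matrix (Fin (2*n)) (Fin (2*n)) ℝ :=
  Matrix.of fun a b =>
    if a.val % 2 = b.val % 2 then
      R ⟨a.val / 2, by have := a.isLt; omega⟩ ⟨b.val / 2, by have := b.isLt; omega⟩
    else 0

/-- `ι(v) ∈ ℝ^{2n}` with `ι(v)_{2i-1} = v_i` and `ι(v)_{2i} = 0` (1-indexed). -/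
def iotaV (n : ℕ) (v : Fin n → ℝ) : Fin (2*n) → ℝ :=
  fun a => if a.val % 2 = 0 then v ⟨a.val / 2, by have := a.isLt; omega⟩ else 0

/-- The position-momentum part `y` of a point `z = (y, ε, t)` of extended phase space. -/
def yPart (n : ℕ) (z : Fin (2*n+2) → ℝ) : Fin (2*n) → ℝ :=
  fun a => z ⟨a.val, by have := a.isLt; omega⟩

/-- The time coordinate `t` of a point `z = (y, ε, t)` of extended phase space. -/
def tCoord (n : ℕ) (z : Fin (2*n+2) → ℝ) : ℝ := z ⟨2*n+1, by omega⟩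

/-- The map `ρ(y, ε, t) = (y + φ(t), ε + H(y,t), t + c)` on extended phase space. -/
def rhoMap (n : ℕ) (φ : ℝ → Fin (2*n) → ℝ) (H : (Fin (2*n) → ℝ) → ℝ → ℝ) (c : ℝ)
    (z : Fin (2*n+2) → ℝ) : Fin (2*n+2) → ℝ :=
  fun i =>
    if hi : i.val < 2*n then z i + φ (tCoord n z) ⟨i.val, hi⟩
    else if i.val = 2*n then z i + H (yPart n z) (tCoord n z)
    else z i + c

/-- The Jacobian matrix (in the standard coordinates) of a map `f : ℝ^N → ℝ^N` at `z`. -/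
def jacM (N : ℕ) (f : (Fin N → ℝ) → (Fin N → ℝ)) (z : Fin N → ℝ) :
    Matrix (Fin N) (Fin N) ℝ :=
  Matrix.of fun i j => fderiv ℝ f z (Pi.single j 1) i



/-! ### Auxiliary lemmas -/

def pe (n : ℕ) : Fin n × Fin 2 ≃ Fin (2*n) where
  toFun p := ⟨2*p.1.val + p.2.val, by have := p.1.isLt; have := p.2.isLt; omega⟩
  invFun a := (⟨a.val/2, by have := a.isLt; omega⟩, ⟨a.val % 2, by omega⟩)
  left_inv p := by
    have h1 := p.1.isLt; have h2 := p.2.isLt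
    ext
    · simp; omega
    · simp; omega
  right_inv a := by ext; simp; omega

lemma sum2 (n : ℕ) (f : Fin (2*n) → ℝ) :
    ∑ a, f a = ∑ i : Fin n, (f ⟨2*i.val, by have := i.isLt; omega⟩
      + f ⟨2*i.val+1, by have := i.isLt; omega⟩) := by
  rw [← Equiv.sum_comp (pe n) f, Fintype.sum_prod_type]
  refine Finset.sum_congr rfl fun i _ => ?_
  rw [Fin.sum_univ_two]
  rfl

lemma sumSplit (n : ℕ) (f : Fin (2*n+2) → ℝ) :
    ∑ k, f k = (∑ k : Fin (2*n), f ⟨k.val, by have := k.isLt; omega⟩)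
      + f ⟨2*n, by omega⟩ + f ⟨2*n+1, by omega⟩ := by
  rw [Fin.sum_univ_castSucc (n := 2*n+1), Fin.sum_univ_castSucc (n := 2*n)]
  rfl

def Jm : Matrix (Fin 2) (Fin 2) ℝ :=
  Matrix.of fun i j =>
    if j.val = i.val + 1 ∧ i.val % 2 = 0 then 1
    else if i.val = j.val + 1 ∧ j.val % 2 = 0 then -1 else 0

open Kronecker in
lemma sigma_eq (n : ℕ) (R : Matrix (Fin n) (Fin n) ℝ) :
    SigmaR n R = (R ⊗ₖ (1 : Matrix (Fin 2) (Fin 2) ℝ)).submatrix (pe n).symm (pe n).symm := by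
  ext a b
  simp only [SigmaR, Matrix.of_apply, Matrix.submatrix_apply, pe, Equiv.coe_fn_symm_mk,
    Matrix.kroneckerMap_apply, Matrix.one_apply]
  by_cases h : a.val % 2 = b.val % 2
  · rw [if_pos h, if_pos (by exact Fin.ext h), mul_one]
  · rw [if_neg h, if_neg (fun hh => h (congrArg Fin.val hh)), mul_zero]

open Kronecker in
lemma zeta_eq (n : ℕ) :
    zetaC n = ((1 : Matrix (Fin n) (Fin n) ℝ) ⊗ₖ Jm).submatrix (pe n).symm (pe n).symm := by
  ext a b
  have ha := a.isLt; have hb := b.isLt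
  simp only [zetaC, Matrix.of_apply, Matrix.submatrix_apply, pe, Equiv.coe_fn_symm_mk,
    Matrix.kroneckerMap_apply, Matrix.one_apply, Jm]
  by_cases h : a.val / 2 = b.val / 2
  · rw [if_pos (Fin.ext h), one_mul]
    split_ifs <;> first | rfl | (exfalso; omega)
  · rw [if_neg (fun hh => h (congrArg Fin.val hh)), zero_mul]
    have hc1 : ¬ (b.val = a.val + 1 ∧ a.val % 2 = 0) := by omega
    have hc2 : ¬ (a.val = b.val + 1 ∧ b.val % 2 = 0) := by omega
    rw [if_neg hc1, if_neg hc2]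

lemma sigma_mul (n : ℕ) (R R' : Matrix (Fin n) (Fin n) ℝ) :
    SigmaR n R' * SigmaR n R = SigmaR n (R' * R) := by
  rw [sigma_eq, sigma_eq, sigma_eq]
  rw [show ((pe n).symm : Fin (2*n) → Fin n × Fin 2)
    = ((pe n).symm : Fin (2*n) ≃ Fin n × Fin 2) from rfl]
  rw [Matrix.submatrix_mul_equiv, ← Matrix.mul_kronecker_mul, mul_one]

lemma sigma_symp (n : ℕ) (R : Matrix (Fin n) (Fin n) ℝ) (hR : Rᵀ * R = 1) :
    (SigmaR n R)ᵀ * zetaC n * SigmaR n R = zetaC n := by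
  rw [sigma_eq, zeta_eq, Matrix.transpose_submatrix, ← Matrix.kroneckerMap_transpose]
  rw [Matrix.submatrix_mul_equiv (e₂ := (pe n).symm), Matrix.submatrix_mul_equiv (e₂ := (pe n).symm)]
  rw [← Matrix.mul_kronecker_mul, ← Matrix.mul_kronecker_mul]
  rw [Matrix.transpose_one]
  simp only [mul_one, one_mul, hR]

def iotaOdd (n : ℕ) (v : Fin n → ℝ) : Fin (2*n) → ℝ :=
  fun a => if a.val % 2 = 1 then v ⟨a.val / 2, by have := a.isLt; omega⟩ else 0

lemma sigma_mulVec (n : ℕ) (R : Matrix (Fin n) (Fin n) ℝ) (v : Fin n → ℝ) :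
    SigmaR n R *ᵥ iotaV n v = iotaV n (R *ᵥ v) := by
  funext a
  simp only [Matrix.mulVec, dotProduct]
  rw [sum2]
  have key : ∀ i : Fin n,
      SigmaR n R a ⟨2*i.val, by have := i.isLt; omega⟩ * iotaV n v ⟨2*i.val, by have := i.isLt; omega⟩ +
      SigmaR n R a ⟨2*i.val+1, by have := i.isLt; omega⟩ * iotaV n v ⟨2*i.val+1, by have := i.isLt; omega⟩ =
      (if a.val % 2 = 0 then R ⟨a.val/2, by have := a.isLt; omega⟩ i * v i else 0) := by
    intro i
    have hi := i.isLt
    have e1 : (2*i.val) % 2 = 0 := by omega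
    have e2 : (2*i.val+1) % 2 = 1 := by omega
    have e3 : (2*i.val)/2 = i.val := by omega
    simp only [SigmaR, iotaV, Matrix.of_apply]
    rcases Nat.mod_two_eq_zero_or_one a.val with h | h <;>
      simp [h, e1, e2, e3, Fin.eta]
  rw [Finset.sum_congr rfl fun i _ => key i]
  by_cases h : a.val % 2 = 0 <;>
    simp [iotaV, h, Matrix.mulVec, dotProduct]

lemma vecMul_iota_zeta (n : ℕ) (v : Fin n → ℝ) :
    Matrix.vecMul (iotaV n v) (zetaC n) = iotaOdd n v := by
  funext b
  simp only [Matrix.vecMul, dotProduct]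
  rw [sum2]
  have key : ∀ i : Fin n,
      iotaV n v ⟨2*i.val, by have := i.isLt; omega⟩ * zetaC n ⟨2*i.val, by have := i.isLt; omega⟩ b +
      iotaV n v ⟨2*i.val+1, by have := i.isLt; omega⟩ * zetaC n ⟨2*i.val+1, by have := i.isLt; omega⟩ b =
      (if i = (⟨b.val/2, by have := b.isLt; omega⟩ : Fin n) ∧ b.val % 2 = 1 then v i else 0) := by
    intro i
    have hi := i.isLt
    have hb := b.isLt
    have e1 : (2*i.val) % 2 = 0 := by omega
    have e3 : (2*i.val)/2 = i.val := by omega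
    simp only [iotaV, zetaC, Matrix.of_apply]
    rw [if_pos e1, if_neg (by omega : ¬ (2*i.val+1) % 2 = 0), zero_mul, add_zero]
    simp only [e3, Fin.eta]
    by_cases hc : b.val = 2*i.val + 1
    · rw [if_pos ⟨hc, e1⟩, mul_one, if_pos ⟨by rw [Fin.ext_iff]; simp; omega, by omega⟩]
    · rw [if_neg (by omega : ¬ (b.val = 2*i.val+1 ∧ (2*i.val)%2 = 0)),
        if_neg (by omega : ¬ (2*i.val = b.val+1 ∧ b.val%2 = 0)), mul_zero]
      rw [if_neg ?_]
      rintro ⟨h1, h2⟩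
      rw [Fin.ext_iff] at h1
      simp at h1
      omega
  rw [Finset.sum_congr rfl fun i _ => key i]
  by_cases h : b.val % 2 = 1
  · simp only [h, and_true]
    rw [Finset.sum_ite_eq' Finset.univ (⟨b.val/2, by have := b.isLt; omega⟩ : Fin n) v]
    simp [iotaOdd, h]
  · simp [iotaOdd, h]

lemma vecMul_iotaOdd_sigma (n : ℕ) (u : Fin n → ℝ) (R : Matrix (Fin n) (Fin n) ℝ) :
    Matrix.vecMul (iotaOdd n u) (SigmaR n R) = iotaOdd n (Matrix.vecMul u R) := by
  funext b
  simp only [Matrix.vecMul, dotProduct]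
  rw [sum2]
  have key : ∀ i : Fin n,
      iotaOdd n u ⟨2*i.val, by have := i.isLt; omega⟩ * SigmaR n R ⟨2*i.val, by have := i.isLt; omega⟩ b +
      iotaOdd n u ⟨2*i.val+1, by have := i.isLt; omega⟩ * SigmaR n R ⟨2*i.val+1, by have := i.isLt; omega⟩ b =
      (if b.val % 2 = 1 then u i * R i ⟨b.val/2, by have := b.isLt; omega⟩ else 0) := by
    intro i
    have hi := i.isLt
    have e1 : (2*i.val) % 2 = 0 := by omega
    have e2 : (2*i.val+1) % 2 = 1 := by omega
    have e3 : (2*i.val)/2 = i.val := by omega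
    have e4 : (2*i.val+1)/2 = i.val := by omega
    simp only [iotaOdd, SigmaR, Matrix.of_apply]
    rcases Nat.mod_two_eq_zero_or_one b.val with h | h <;>
      simp [h, e1, e2, e3, e4, Fin.eta]
  rw [Finset.sum_congr rfl fun i _ => key i]
  by_cases h : b.val % 2 = 1 <;>
    simp [iotaOdd, h, Matrix.vecMul, dotProduct]

lemma iotaOdd_dot_iota (n : ℕ) (u : Fin n → ℝ) (v : Fin n → ℝ) :
    iotaOdd n u ⬝ᵥ iotaV n v = 0 := by
  simp only [dotProduct]
  refine Finset.sum_eq_zero fun a _ => ?_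
  simp only [iotaOdd, iotaV]
  rcases Nat.mod_two_eq_zero_or_one a.val with h | h <;> simp [h]

lemma cross_zero (n : ℕ) (v v' : Fin n → ℝ) (R' : Matrix (Fin n) (Fin n) ℝ) :
    Matrix.vecMul (Matrix.vecMul (iotaV n v') (zetaC n)) (SigmaR n R') ⬝ᵥ iotaV n v = 0 := by
  rw [vecMul_iota_zeta, vecMul_iotaOdd_sigma, iotaOdd_dot_iota]

lemma iota_add (n : ℕ) (x y : Fin n → ℝ) :
    iotaV n (x + y) = iotaV n x + iotaV n y := by
  funext a
  simp only [iotaV, Pi.add_apply]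
  split_ifs <;> simp

lemma GamO_mul (n : ℕ) (S S' : Matrix (Fin (2*n)) (Fin (2*n)) ℝ) (w w' : Fin (2*n) → ℝ)
    (hS' : S'ᵀ * zetaC n * S' = zetaC n)
    (hcross : Matrix.vecMul (Matrix.vecMul w' (zetaC n)) S' ⬝ᵥ w = 0) :
    GamO n S' w' 0 * GamO n S w 0 = GamO n (S' * S) (S' *ᵥ w + w') 0 := by
  have key : Matrix.vecMul (Matrix.vecMul (S' *ᵥ w) (zetaC n)) S' = Matrix.vecMul w (zetaC n) := by
    rw [← Matrix.vecMul_transpose, Matrix.vecMul_vecMul, Matrix.vecMul_vecMul, ← mul_assoc, hS']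
  have expand : Matrix.vecMul (Matrix.vecMul (S' *ᵥ w + w') (zetaC n)) (S' * S)
      = Matrix.vecMul (Matrix.vecMul (Matrix.vecMul w' (zetaC n)) S') S
        + Matrix.vecMul (Matrix.vecMul w (zetaC n)) S := by
    rw [Matrix.add_vecMul, Matrix.add_vecMul, ← Matrix.vecMul_vecMul, ← Matrix.vecMul_vecMul,
      key, add_comm]
  ext i j
  rw [Matrix.mul_apply, sumSplit n (fun k => GamO n S' w' 0 i k * GamO n S w 0 k j)]
  have hi2 := i.isLt
  have hj2 := j.isLt
  have hA : ¬ ((2*n+1 : ℕ) < 2*n) := by omega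
  have hB : (2*n+1 : ℕ) ≠ 2*n := by omega
  have hx : ∀ x : Fin (2*n), ¬ (x.val = 2*n+1) := fun x => by have := x.isLt; omega
  rcases (by omega : i.val < 2*n ∨ i.val = 2*n ∨ i.val = 2*n+1) with hi | hi | hi <;>
    rcases (by omega : j.val < 2*n ∨ j.val = 2*n ∨ j.val = 2*n+1) with hj | hj | hj <;>
    [skip; skip; skip; skip; skip; skip; skip; skip; skip]
  · have hj3 : j.val ≠ 2*n+1 := by omega
    simp [GamO, hi, hj, hj3, hA, hB, hx, Matrix.mul_apply]
  · have hj' : ¬ j.val < 2*n := by omega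
    simp [GamO, hi, hj, hj']
  · have hj' : ¬ j.val < 2*n := by omega
    have hj'' : j.val ≠ 2*n := by omega
    simp [GamO, hi, hj, hj', hj'', Matrix.mulVec, dotProduct]
  · have hi' : ¬ i.val < 2*n := by omega
    have hj3 : j.val ≠ 2*n+1 := by omega
    have key2 := congrFun expand ⟨j.val, hj⟩
    simp only [Pi.add_apply, Matrix.vecMul_vecMul] at key2
    simp [GamO, hi, hi', hj, hj3, hA, hB, hx]
    rw [key2]
    congr 1
    have e5 : (Matrix.vecMul w' (zetaC n * S' * S)) ⟨j.val, hj⟩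
        = (Matrix.vecMul (Matrix.vecMul w' (zetaC n * S')) S) ⟨j.val, hj⟩ := by
      rw [Matrix.vecMul_vecMul]
    rw [e5]
    rfl
  · have hi' : ¬ i.val < 2*n := by omega
    have hj' : ¬ j.val < 2*n := by omega
    simp [GamO, hi, hi', hj, hj']
  · have hi' : ¬ i.val < 2*n := by omega
    have hj' : ¬ j.val < 2*n := by omega
    have hj'' : j.val ≠ 2*n := by omega
    have hc : Matrix.vecMul w' (zetaC n * S') ⬝ᵥ w = 0 := by
      rw [← Matrix.vecMul_vecMul]; exact hcross
    simp only [dotProduct] at hc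
    simp [GamO, hi, hi', hj, hj', hj'', hA, hB, hx, hc]
  · have hi' : ¬ i.val < 2*n := by omega
    have hi'' : i.val ≠ 2*n := by omega
    have hj3 : j.val ≠ 2*n+1 := by omega
    simp [GamO, hi, hi', hi'', hj, hj3, hA, hB, hx]
  · have hi' : ¬ i.val < 2*n := by omega
    have hi'' : i.val ≠ 2*n := by omega
    have hj' : ¬ j.val < 2*n := by omega
    simp [GamO, hi, hi', hi'', hj, hj', hA, hB, hx]
  · have hi' : ¬ i.val < 2*n := by omega
    have hi'' : i.val ≠ 2*n := by omega
    have hj' : ¬ j.val < 2*n := by omega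
    have hj'' : j.val ≠ 2*n := by omega
    simp [GamO, hi, hi', hi'', hj, hj', hj'', hA, hB, hx]


theorem statement15 (n : ℕ) (hn : 1 ≤ n) :
    (∀ (R R' : Matrix (Fin n) (Fin n) ℝ) (v v' : Fin n → ℝ),
      Rᵀ * R = 1 → R.det = 1 → R'ᵀ * R' = 1 → R'.det = 1 →
      GamO n (SigmaR n R') (iotaV n v') 0 * GamO n (SigmaR n R) (iotaV n v) 0 =
        GamO n (SigmaR n (R' * R)) (iotaV n (v' + R'.mulVec v)) 0) ∧
    (∀ R : Matrix (Fin n) (Fin n) ℝ, Rᵀ * R = 1 → R.det = 1 →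
      (SigmaR n R)ᵀ * zetaC n * SigmaR n R = zetaC n) ∧
    (∀ (R R' : Matrix (Fin n) (Fin n) ℝ) (v v' : Fin n → ℝ),
      Rᵀ * R = 1 → R.det = 1 → R'ᵀ * R' = 1 → R'.det = 1 →
      GamO n (SigmaR n R) (iotaV n v) 0 = GamO n (SigmaR n R') (iotaV n v') 0 →
      v = v' ∧ R = R') := by
  have hB : (2*n+1 : ℕ) ≠ 2*n := by omega
  have hA : ¬ ((2*n+1 : ℕ) < 2*n) := by omega
  refine ⟨?_, fun R hR _ => sigma_symp n R hR, ?_⟩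
  · intro R R' v v' hR _ hR' _
    rw [GamO_mul n (SigmaR n R) (SigmaR n R') (iotaV n v) (iotaV n v')
      (sigma_symp n R' hR') (cross_zero n v v' R')]
    have hw : iotaV n (R' *ᵥ v) + iotaV n v' = iotaV n (v' + R'.mulVec v) := by
      rw [iota_add]
      exact add_comm _ _
    rw [sigma_mul, sigma_mulVec, hw]
  · intro R R' v v' _ _ _ _ h
    constructor
    · funext a
      have ha := a.isLt
      have c1 : (2*a.val) < 2*n := by omega
      have h1 := congrFun (congrFun h ⟨2*a.val, by omega⟩) ⟨2*n+1, by omega⟩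
      have e1 : (2*a.val) % 2 = 0 := by omega
      have e3 : (2*a.val)/2 = a.val := by omega
      simp only [GamO, Matrix.of_apply] at h1
      rw [dif_pos c1, dif_pos c1] at h1
      rw [dif_neg hA, dif_neg hA, if_neg hB, if_neg hB] at h1
      simpa [iotaV, e1, e3, Fin.eta] using h1
    · ext a b
      have ha := a.isLt
      have hb := b.isLt
      have c1 : (2*a.val) < 2*n := by omega
      have c2 : (2*b.val) < 2*n := by omega
      have h1 := congrFun (congrFun h ⟨2*a.val, by omega⟩) ⟨2*b.val, by omega⟩
      have e1 : (2*a.val) % 2 = 0 := by omega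
      have e2 : (2*b.val) % 2 = 0 := by omega
      have e3 : (2*a.val)/2 = a.val := by omega
      have e4 : (2*b.val)/2 = b.val := by omega
      simp only [GamO, Matrix.of_apply] at h1
      rw [dif_pos c1, dif_pos c1, dif_pos c2, dif_pos c2] at h1
      simpa [SigmaR, e1, e2, e3, e4, Fin.eta] using h1


end
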